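/- For every n ≥ 1: every 𝜸 ∈ 𝒜_{n+1} with 𝜸 ⪯ {{n+1}} is either {{n+1}} itself or equals f(𝜶) for a unique 𝜶 ∈ 𝒜_n. Consequently, the node {[n], {n+1}} = f({[n]}) is the unique direct predecessor of {{n+1}} in 𝒜_{n+1}: there exists no 𝜷 ∈ 𝒜_{n+1} with 𝜷 ≺ {{n+1}} and not 𝜷 ⪯ {[n],{n+1}}. -/
import Mathlib


noncomputable section

open scoped BigOperators

attribute [local instance] Classical.propDecidable

/-- The antichains of nonempty subsets of `[n] = {1,…,n}` (modelled as `Fin n`):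
nonempty collections of nonempty subsets of `[n]`, no element of which is contained
in another distinct element. -/
def Antichains (n : ℕ) : Set (Finset (Finset (Fin n))) :=
  {A | A.Nonempty ∧ (∀ a ∈ A, a.Nonempty) ∧ ∀ a ∈ A, ∀ b ∈ A, a ≠ b → ¬a ⊆ b}

/-- The partial order on antichains: `A ⪯ B` iff every `b ∈ B` contains some `a ∈ A`. -/
def achLE {n : ℕ} (A B : Finset (Finset (Fin n))) : Prop :=
  ∀ b ∈ B, ∃ a ∈ A, a ⊆ b

/-- Strict order on antichains: `A ≺ B` iff `A ⪯ B` and not `B ⪯ A`. -/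
def achLT {n : ℕ} (A B : Finset (Finset (Fin n))) : Prop :=
  achLE A B ∧ ¬achLE B A

/-- `S_n⁽ᵏ⁾`: the antichains all of whose elements have cardinality `> k`. -/
def Sset (n k : ℕ) : Set (Finset (Finset (Fin n))) :=
  {A | A ∈ Antichains n ∧ ∀ a ∈ A, k < a.card}

/-- `R_n⁽ᵏ⁾`: the antichains with at least two distinct elements of cardinality `≤ k`. -/
def Rset (n k : ℕ) : Set (Finset (Finset (Fin n))) :=
  {A | A ∈ Antichains n ∧ ∃ a ∈ A, ∃ b ∈ A, a ≠ b ∧ a.card ≤ k ∧ b.card ≤ k}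

/-- `U_n⁽ᵏ⁾(β)`: the antichains containing `β` in which every element other than `β`
has cardinality `> k`. -/
def Uset (n k : ℕ) (β : Finset (Fin n)) : Set (Finset (Finset (Fin n))) :=
  {A | A ∈ Antichains n ∧ β ∈ A ∧ ∀ a ∈ A, a ≠ β → k < a.card}

/-- A subset of `[n]` viewed as a subset of `[n+1]`. -/
def liftSet {n : ℕ} (a : Finset (Fin n)) : Finset (Fin (n + 1)) :=
  a.map ⟨Fin.castSucc, Fin.castSucc_injective n⟩

/-- The map `f : 𝒜_n → 𝒜_{n+1}`, `f(𝜶) = 𝜶 ∪ {{n+1}}` (the extra element `n+1` of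
`[n+1]` is modelled by `Fin.last n`). -/
def fmap {n : ℕ} (A : Finset (Finset (Fin n))) : Finset (Finset (Fin (n + 1))) :=
  A.image liftSet ∪ {({Fin.last n} : Finset (Fin (n + 1)))}

/-!
STATEMENT 12.  For every `n ≥ 1`: every `𝜸 ∈ 𝒜_{n+1}` with `𝜸 ⪯ {{n+1}}` is either
`{{n+1}}` itself or equals `f(𝜶)` for a unique `𝜶 ∈ 𝒜_n`.  Consequently
`{[n],{n+1}} = f({[n]})` is the unique direct predecessor of `{{n+1}}` in `𝒜_{n+1}`:
there is no `𝜷 ∈ 𝒜_{n+1}` with `𝜷 ≺ {{n+1}}` and not `𝜷 ⪯ {[n],{n+1}}`.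
-/

lemma last_notMem_liftSet {n : ℕ} (a : Finset (Fin n)) : Fin.last n ∉ liftSet a := by
  simp only [liftSet, Finset.mem_map, Function.Embedding.coeFn_mk]
  rintro ⟨y, -, h⟩
  exact absurd h (Fin.castSucc_lt_last y).ne

lemma singleton_last_notMem_image {n : ℕ} (A : Finset (Finset (Fin n))) :
    ({Fin.last n} : Finset (Fin (n + 1))) ∉ A.image liftSet := by
  simp only [Finset.mem_image]
  rintro ⟨a, -, h⟩
  exact last_notMem_liftSet a (h ▸ Finset.mem_singleton_self _)

lemma fmap_inj {n : ℕ} : Function.Injective (fmap (n := n)) := by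
  intro A B h
  have h' : A.image liftSet = B.image liftSet := by
    have h2 := congrArg (fun s => Finset.erase s ({Fin.last n} : Finset (Fin (n + 1)))) h
    simpa [fmap, Finset.erase_union_distrib, Finset.erase_singleton,
      Finset.erase_eq_of_notMem (singleton_last_notMem_image A),
      Finset.erase_eq_of_notMem (singleton_last_notMem_image B)] using h2
  exact Finset.image_injective (Finset.map_injective _) h'

def preSet {n : ℕ} (b : Finset (Fin (n + 1))) : Finset (Fin n) :=
  b.preimage Fin.castSucc (Fin.castSucc_injective n).injOn

lemma liftSet_preSet {n : ℕ} {b : Finset (Fin (n + 1))} (hb : Fin.last n ∉ b) :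
    liftSet (preSet b) = b := by
  ext x
  simp only [liftSet, preSet, Finset.mem_map, Finset.mem_preimage,
    Function.Embedding.coeFn_mk]
  constructor
  · rintro ⟨y, hy, rfl⟩; exact hy
  · intro hx
    have hne : x ≠ Fin.last n := fun h => hb (h ▸ hx)
    obtain ⟨y, rfl⟩ := Fin.exists_castSucc_eq.mpr hne
    exact ⟨y, hx, rfl⟩


theorem unique_direct_predecessor_of_singleton_last (n : ℕ) (hn : 1 ≤ n) :
    (∀ C ∈ Antichains (n + 1),
      achLE C ({({Fin.last n} : Finset (Fin (n + 1)))} : Finset (Finset (Fin (n + 1)))) →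
        C = ({({Fin.last n} : Finset (Fin (n + 1)))} : Finset (Finset (Fin (n + 1)))) ∨
          ∃! A : Finset (Finset (Fin n)), A ∈ Antichains n ∧ C = fmap A) ∧
    ¬∃ B ∈ Antichains (n + 1),
      achLT B ({({Fin.last n} : Finset (Fin (n + 1)))} : Finset (Finset (Fin (n + 1)))) ∧
        ¬achLE B (fmap ({(Finset.univ : Finset (Fin n))} : Finset (Finset (Fin n)))) := by
  classical
  have key : ∀ C ∈ Antichains (n + 1),
      achLE C ({({Fin.last n} : Finset (Fin (n + 1)))} : Finset (Finset (Fin (n + 1)))) →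
      ({Fin.last n} : Finset (Fin (n + 1))) ∈ C := by
    intro C hC hle
    obtain ⟨c, hcC, hcsub⟩ := hle _ (Finset.mem_singleton_self _)
    have hc : c = {Fin.last n} := by
      rcases Finset.subset_singleton_iff.mp hcsub with h | h
      · exact absurd h (hC.2.1 c hcC).ne_empty
      · exact h
    exact hc ▸ hcC
  constructor
  · intro C hC hle
    have hlast : ({Fin.last n} : Finset (Fin (n + 1))) ∈ C := key C hC hle
    by_cases hC1 : C = ({({Fin.last n} : Finset (Fin (n + 1)))} : Finset (Finset (Fin (n + 1))))
    · exact Or.inl hC1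
    right
    have hnot : ∀ b ∈ C.erase ({Fin.last n} : Finset (Fin (n + 1))), Fin.last n ∉ b := by
      intro b hb
      have hbC := Finset.mem_of_mem_erase hb
      have hne := Finset.ne_of_mem_erase hb
      intro hlb
      exact hC.2.2 _ hlast _ hbC (Ne.symm hne) (Finset.singleton_subset_iff.mpr hlb)
    set A : Finset (Finset (Fin n)) :=
      (C.erase ({Fin.last n} : Finset (Fin (n + 1)))).image preSet with hA
    have hlift : ∀ b ∈ C.erase ({Fin.last n} : Finset (Fin (n + 1))), liftSet (preSet b) = b :=
      fun b hb => liftSet_preSet (hnot b hb)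
    have himg : A.image liftSet = C.erase ({Fin.last n} : Finset (Fin (n + 1))) := by
      rw [hA, Finset.image_image]
      calc (C.erase _).image (liftSet ∘ preSet)
          = (C.erase _).image id := Finset.image_congr (fun b hb => hlift b hb)
        _ = _ := Finset.image_id
    have hCfA : C = fmap A := by
      rw [fmap, himg, Finset.erase_union_of_mem (Finset.mem_singleton_self _),
        Finset.union_eq_left.mpr (Finset.singleton_subset_iff.mpr hlast)]
    refine ⟨A, ⟨⟨?_, ?_, ?_⟩, hCfA⟩, ?_⟩
    · obtain ⟨b, hbC, hbne⟩ : ∃ b ∈ C, b ≠ ({Fin.last n} : Finset (Fin (n + 1))) := by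
        by_contra h
        push_neg at h
        exact hC1 (Finset.eq_singleton_iff_unique_mem.mpr ⟨hlast, h⟩)
      exact ⟨preSet b, Finset.mem_image_of_mem _ (Finset.mem_erase.mpr ⟨hbne, hbC⟩)⟩
    · intro a ha
      rw [hA] at ha
      obtain ⟨b, hb, rfl⟩ := Finset.mem_image.mp ha
      obtain ⟨x, hx⟩ := hC.2.1 b (Finset.mem_of_mem_erase hb)
      have hne : x ≠ Fin.last n := fun h => hnot b hb (h ▸ hx)
      obtain ⟨y, rfl⟩ := Fin.exists_castSucc_eq.mpr hne
      exact ⟨y, Finset.mem_preimage.mpr hx⟩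
    · intro a1 ha1 a2 ha2 hne hsub
      rw [hA] at ha1 ha2
      obtain ⟨b1, hb1, rfl⟩ := Finset.mem_image.mp ha1
      obtain ⟨b2, hb2, rfl⟩ := Finset.mem_image.mp ha2
      have hb12 : b1 ≠ b2 := by
        intro h; exact hne (h ▸ rfl)
      have hsub' : b1 ⊆ b2 := by
        have hmap : liftSet (preSet b1) ⊆ liftSet (preSet b2) :=
          Finset.map_subset_map.mpr hsub
        rwa [hlift b1 hb1, hlift b2 hb2] at hmap
      exact hC.2.2 _ (Finset.mem_of_mem_erase hb1) _ (Finset.mem_of_mem_erase hb2) hb12 hsub'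
    · rintro A' ⟨-, hCA'⟩
      exact fmap_inj (hCA'.symm.trans hCfA)
  · rintro ⟨B, hB, ⟨hle, hnle⟩, hnach⟩
    apply hnach
    have hlast : ({Fin.last n} : Finset (Fin (n + 1))) ∈ B := key B hB hle
    intro b hb
    rw [fmap] at hb
    rcases Finset.mem_union.mp hb with hb | hb
    · obtain ⟨a, ha, rfl⟩ := Finset.mem_image.mp hb
      rw [Finset.mem_singleton] at ha
      subst ha
      rw [achLE] at hnle
      push_neg at hnle
      obtain ⟨c, hcB, hc⟩ := hnle
      have hcl : Fin.last n ∉ c := by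
        intro h
        exact hc _ (Finset.mem_singleton_self _) (Finset.singleton_subset_iff.mpr h)
      refine ⟨c, hcB, fun x hx => ?_⟩
      have hne : x ≠ Fin.last n := fun h => hcl (h ▸ hx)
      obtain ⟨y, rfl⟩ := Fin.exists_castSucc_eq.mpr hne
      exact Finset.mem_map_of_mem _ (Finset.mem_univ y)
    · rw [Finset.mem_singleton] at hb
      subst hb
      exact ⟨_, hlast, subset_rfl⟩
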